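/- For a > 0, b > 0, a positive integer G, and 0 ≤ q̂ ≤ G, consider the family of probability densities on (0,1) proportional to θ^{a-1}(1-θ)^{b-1}(1-θz)^{G-q̂} ∏_{g=1}^{q̂}(1-θx_g), where z = 1 - λ₁/λ₀ and x_g = 1 - (λ₁/λ₀)e^{c_g(λ₀-λ₁)} with fixed constants c_g > 0 and fixed λ₁ > 0. Then as λ₀ → ∞, the mean of this distribution converges to (a + q̂)/(a + b + G). -/

import Mathlib

open Filter Real

open intervalIntegral MeasureTheory

lemma beta_key (p r x : ℝ) (hx : x ∈ Set.Icc (0:ℝ) 1) :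
    ((x:ℂ) ^ ((p:ℂ)-1) * (1-(x:ℂ)) ^ ((r:ℂ)-1)) = ((x ^ (p-1) * (1-x) ^ (r-1) : ℝ) : ℂ) := by
  rw [show ((p:ℂ)-1) = ((p-1:ℝ):ℂ) by push_cast; ring,
      show ((r:ℂ)-1) = ((r-1:ℝ):ℂ) by push_cast; ring,
      show (1 - (x:ℂ)) = ((1-x : ℝ):ℂ) by push_cast; ring,
      ← Complex.ofReal_cpow hx.1, ← Complex.ofReal_cpow (by linarith [hx.2] : (0:ℝ) ≤ 1 - x),
      ← Complex.ofReal_mul]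

lemma beta_integrable (p r : ℝ) (hp : 0 < p) (hr : 0 < r) :
    IntervalIntegrable (fun x => x ^ (p-1) * (1-x) ^ (r-1)) volume 0 1 := by
  have h := Complex.betaIntegral_convergent (u := p) (v := r) (by simpa) (by simpa)
  rw [intervalIntegrable_iff_integrableOn_Ioc_of_le zero_le_one] at h ⊢
  refine (h.re).congr ?_
  filter_upwards [ae_restrict_mem measurableSet_Ioc] with x hx
  rw [beta_key p r x ⟨hx.1.le, hx.2⟩]
  simp

lemma real_beta (p r : ℝ) (hp : 0 < p) (hr : 0 < r) :
    ∫ x in (0:ℝ)..1, x ^ (p-1) * (1-x) ^ (r-1)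
      = Real.Gamma p * Real.Gamma r / Real.Gamma (p+r) := by
  have h := Complex.Gamma_mul_Gamma_eq_betaIntegral (s := p) (t := r) (by simpa) (by simpa)
  have hB : Complex.betaIntegral p r
      = ((∫ x in (0:ℝ)..1, x ^ (p-1) * (1-x) ^ (r-1) : ℝ) : ℂ) := by
    rw [Complex.betaIntegral, ← intervalIntegral.integral_ofReal]
    refine intervalIntegral.integral_congr ?_
    intro x hx
    rw [Set.uIcc_of_le zero_le_one] at hx
    exact beta_key p r x hx
  rw [hB, Complex.Gamma_ofReal, Complex.Gamma_ofReal, ← Complex.ofReal_add,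
    Complex.Gamma_ofReal, ← Complex.ofReal_mul, ← Complex.ofReal_mul] at h
  have h' := Complex.ofReal_injective h
  have hpos : 0 < Real.Gamma (p+r) := Real.Gamma_pos_of_pos (by linarith)
  field_simp
  linarith [h']

lemma M_tendsto (cg lam1 : ℝ) (hcg : 0 < cg) (hlam1 : 0 < lam1) :
    Tendsto (fun lam0 : ℝ => (lam1/lam0) * Real.exp (cg * (lam0 - lam1))) atTop atTop := by
  have h0 : Tendsto (fun x : ℝ => Real.exp (cg * x) / (cg * x)) atTop atTop := by
    have h := Real.tendsto_exp_div_pow_atTop 1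
    simp only [pow_one] at h
    exact h.comp (Tendsto.const_mul_atTop hcg tendsto_id)
  have h1 : Tendsto (fun x : ℝ => Real.exp (cg * x) / x) atTop atTop := by
    refine (Tendsto.const_mul_atTop hcg h0).congr' ?_
    filter_upwards [eventually_gt_atTop 0] with x hx
    field_simp
  have h2 := Tendsto.const_mul_atTop (r := lam1 * Real.exp (-(cg * lam1)))
    (by positivity) h1
  refine h2.congr' ?_
  filter_upwards [eventually_gt_atTop 0] with x hx
  rw [mul_sub, Real.exp_sub, Real.exp_neg]
  field_simp

lemma key_tendsto (b : ℝ) (hb : 0 < b) (n q : ℕ) (c : Fin q → ℝ) (hc : ∀ g, 0 < c g)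
    (lam1 : ℝ) (hlam1 : 0 < lam1) (p : ℝ) (hp : -1 < p) :
    Tendsto (fun lam0 : ℝ => ∫ θ in (0:ℝ)..1, θ ^ p * (1-θ)^(b-1) * (1 - θ*(1 - lam1/lam0))^n *
        ∏ g, (θ + (1-θ)/((lam1/lam0) * Real.exp (c g * (lam0-lam1)))))
      atTop (nhds (∫ θ in (0:ℝ)..1, θ ^ p * (1-θ)^(b-1) * (1-θ)^n * θ^q)) := by
  have hM : ∀ g, Tendsto (fun lam0 : ℝ => (lam1/lam0) * Real.exp (c g * (lam0 - lam1)))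
      atTop atTop := fun g => M_tendsto (c g) lam1 (hc g) hlam1
  apply intervalIntegral.tendsto_integral_filter_of_dominated_convergence
    (bound := fun θ => θ ^ p * (1-θ)^(b-1))
  · exact Eventually.of_forall fun lam0 => (by fun_prop : Measurable _).aestronglyMeasurable
  · -- bound
    have hz : ∀ᶠ lam0 : ℝ in atTop, 0 ≤ lam1/lam0 ∧ lam1/lam0 ≤ 1 := by
      filter_upwards [eventually_ge_atTop lam1, eventually_gt_atTop 0] with x h1 h2
      constructor
      · positivity
      · rw [div_le_one h2]; exact h1
    have hMev : ∀ᶠ lam0 : ℝ in atTop, ∀ g,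
        1 ≤ (lam1/lam0) * Real.exp (c g * (lam0 - lam1)) :=
      eventually_all.2 fun g => (hM g).eventually_ge_atTop 1
    filter_upwards [hz, hMev] with lam0 ⟨hz0, hz1⟩ hM1
    refine Eventually.of_forall fun θ hθ => ?_
    rw [Set.uIoc_of_le zero_le_one] at hθ
    obtain ⟨hθ0, hθ1⟩ := hθ
    have h1θ : 0 ≤ 1 - θ := by linarith
    have hpow : 0 ≤ (1 - θ*(1 - lam1/lam0))^n ∧ (1 - θ*(1 - lam1/lam0))^n ≤ 1 := by
      constructor
      · apply pow_nonneg; nlinarith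
      · apply pow_le_one₀ (by nlinarith) (by nlinarith)
    have hprod : 0 ≤ (∏ g, (θ + (1-θ)/((lam1/lam0) * Real.exp (c g * (lam0-lam1))))) ∧
        (∏ g, (θ + (1-θ)/((lam1/lam0) * Real.exp (c g * (lam0-lam1))))) ≤ 1 := by
      constructor
      · apply Finset.prod_nonneg
        intro g _
        have := hM1 g
        positivity
      · apply Finset.prod_le_one
        · intro g _
          have := hM1 g
          positivity
        · intro g _
          have hg := hM1 g
          have : (1-θ)/((lam1/lam0) * Real.exp (c g * (lam0-lam1))) ≤ 1 - θ :=
            div_le_self h1θ hg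
          linarith
    have hbn : 0 ≤ θ ^ p * (1-θ)^(b-1) := by positivity
    rw [Real.norm_eq_abs,
      abs_of_nonneg (mul_nonneg (mul_nonneg hbn hpow.1) hprod.1)]
    calc θ ^ p * (1-θ)^(b-1) * (1 - θ*(1 - lam1/lam0))^n *
          (∏ g, (θ + (1-θ)/((lam1/lam0) * Real.exp (c g * (lam0-lam1)))))
        ≤ θ ^ p * (1-θ)^(b-1) * (1 - θ*(1 - lam1/lam0))^n * 1 :=
          mul_le_mul_of_nonneg_left hprod.2 (mul_nonneg hbn hpow.1)
      _ = θ ^ p * (1-θ)^(b-1) * (1 - θ*(1 - lam1/lam0))^n := by ring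
      _ ≤ θ ^ p * (1-θ)^(b-1) * 1 := mul_le_mul_of_nonneg_left hpow.2 hbn
      _ = θ ^ p * (1-θ)^(b-1) := by ring
  · have := beta_integrable (p+1) b (by linarith) hb
    simpa using this
  · refine Eventually.of_forall fun θ _ => ?_
    have hzt : Tendsto (fun lam0 : ℝ => lam1/lam0) atTop (nhds 0) :=
      Tendsto.div_atTop tendsto_const_nhds tendsto_id
    have h3 : Tendsto (fun lam0 : ℝ => (1 - θ*(1 - lam1/lam0))^n) atTop (nhds ((1-θ)^n)) := by
      have : Tendsto (fun lam0 : ℝ => 1 - θ*(1 - lam1/lam0)) atTop (nhds (1-θ)) := by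
        have := ((tendsto_const_nhds (x := (1:ℝ))).sub hzt).const_mul θ
        simpa using (tendsto_const_nhds (x := (1:ℝ))).sub this
      exact this.pow n
    have h4 : Tendsto (fun lam0 : ℝ =>
        ∏ g, (θ + (1-θ)/((lam1/lam0) * Real.exp (c g * (lam0-lam1))))) atTop (nhds (θ^q)) := by
      have : Tendsto (fun lam0 : ℝ =>
          ∏ g, (θ + (1-θ)/((lam1/lam0) * Real.exp (c g * (lam0-lam1))))) atTop
          (nhds (∏ _g : Fin q, θ)) := by
        apply tendsto_finset_prod
        intro g _
        have : Tendsto (fun lam0 : ℝ => (1-θ)/((lam1/lam0) * Real.exp (c g * (lam0-lam1))))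
            atTop (nhds 0) := Tendsto.div_atTop tendsto_const_nhds (hM g)
        simpa using (tendsto_const_nhds (x := θ)).add this
      simpa using this
    simpa using (((tendsto_const_nhds (x := θ ^ p * (1-θ)^(b-1)))).mul h3).mul h4

lemma limit_integral_eq (b : ℝ) (hb : 0 < b) (n q : ℕ) (p : ℝ) (hp : -1 < p) :
    ∫ θ in (0:ℝ)..1, θ ^ p * (1-θ)^(b-1) * (1-θ)^n * θ^q
      = Real.Gamma (p+q+1) * Real.Gamma (b+n) / Real.Gamma (p+q+1+(b+n)) := by
  have h : ∫ θ in (0:ℝ)..1, θ ^ p * (1-θ)^(b-1) * (1-θ)^n * θ^q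
      = ∫ θ in (0:ℝ)..1, θ ^ ((p+q+1)-1) * (1-θ) ^ ((b+n)-1) := by
    refine intervalIntegral.integral_congr_ae ?_
    have h1 : ∀ᵐ x : ℝ, x ≠ 1 := by
      refine (MeasureTheory.measure_eq_zero_iff_ae_notMem (μ := volume) (s := {1})).mp
        (Real.volume_singleton) |>.mono ?_
      intro x hx
      simpa using hx
    filter_upwards [h1] with θ hθ hmem
    rw [Set.uIoc_of_le zero_le_one] at hmem
    have hθ0 : 0 < θ := hmem.1
    have hθ1 : 0 < 1 - θ := lt_of_le_of_ne (by linarith [hmem.2]) (by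
      intro h; exact hθ (by linarith))
    rw [show ((p+q+1)-1 : ℝ) = p + q by ring, show ((b+n)-1 : ℝ) = (b-1) + n by ring,
      Real.rpow_add hθ0, Real.rpow_add hθ1, Real.rpow_natCast, Real.rpow_natCast]
    ring
  rw [h, real_beta (p+q+1) (b+n) (by have := Nat.cast_nonneg (α := ℝ) q; linarith) (by positivity)]

/-- As `λ₀ → ∞`, the mean of the generalized Gauss hypergeometric distribution
`π(θ) ∝ θ^{a-1}(1-θ)^{b-1}(1-θz)^{G-q̂} ∏_{g=1}^{q̂}(1-θx_g)` (with `z = 1 - λ₁/λ₀` and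
`x_g = 1 - (λ₁/λ₀)e^{c_g(λ₀-λ₁)}`) converges to `(a + q̂)/(a + b + G)`. -/
theorem ssgl_theta_conditional_mean_limit (a b : ℝ) (ha : 0 < a) (hb : 0 < b)
    (G q : ℕ) (hG : 0 < G) (hq : q ≤ G) (c : Fin q → ℝ) (hc : ∀ g, 0 < c g)
    (lam1 : ℝ) (hlam1 : 0 < lam1) :
    Tendsto (fun lam0 : ℝ =>
        (∫ θ in (0:ℝ)..1, θ ^ a * (1 - θ) ^ (b - 1) * (1 - θ * (1 - lam1 / lam0)) ^ (G - q) *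
            ∏ g, (1 - θ * (1 - (lam1 / lam0) * Real.exp (c g * (lam0 - lam1))))) /
        (∫ θ in (0:ℝ)..1, θ ^ (a - 1) * (1 - θ) ^ (b - 1) * (1 - θ * (1 - lam1 / lam0)) ^ (G - q) *
            ∏ g, (1 - θ * (1 - (lam1 / lam0) * Real.exp (c g * (lam0 - lam1))))))
      atTop (nhds ((a + q) / (a + b + G))) := by
  set n := G - q with hn
  have hncast : (n : ℝ) = (G : ℝ) - q := by
    rw [hn]; exact Nat.cast_sub hq
  have hq0 : (0:ℝ) ≤ q := Nat.cast_nonneg q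
  have keyN := key_tendsto b hb n q c hc lam1 hlam1 a (by linarith)
  have keyD := key_tendsto b hb n q c hc lam1 hlam1 (a-1) (by linarith)
  rw [limit_integral_eq b hb n q a (by linarith)] at keyN
  rw [limit_integral_eq b hb n q (a-1) (by linarith)] at keyD
  have hApos : (0:ℝ) < a + q := by linarith
  have hrpos : (0:ℝ) < b + n := by positivity
  rw [show (a-1)+(q:ℝ)+1 = a + q by ring] at keyD
  have g1 := Real.Gamma_pos_of_pos hApos
  have g2 := Real.Gamma_pos_of_pos hrpos
  have g3 := Real.Gamma_pos_of_pos (show (0:ℝ) < (a+q) + (b+n) by linarith)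
  have hDpos : 0 < Real.Gamma (a+q) * Real.Gamma (b+n) / Real.Gamma (a+q+(b+n)) := by
    positivity
  have hdiv := keyN.div keyD (ne_of_gt hDpos)
  have hsum : a + (q:ℝ) + (b+n) = a + b + G := by rw [hncast]; ring
  have hval : (Real.Gamma (a+q+1) * Real.Gamma (b+n) / Real.Gamma (a+q+1+(b+n)))
      / (Real.Gamma (a+q) * Real.Gamma (b+n) / Real.Gamma (a+q+(b+n)))
      = (a + q) / (a + b + G) := by
    rw [show a+(q:ℝ)+1+(b+n) = (a+q+(b+n))+1 by ring,
      Real.Gamma_add_one (ne_of_gt hApos),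
      Real.Gamma_add_one (ne_of_gt (show (0:ℝ) < a+q+(b+n) by linarith)), ← hsum]
    field_simp
  rw [hval] at hdiv
  refine Filter.Tendsto.congr' ?_ hdiv
  filter_upwards [eventually_gt_atTop 0] with lam0 hlam0
  have hMpos : ∀ g : Fin q, 0 < (lam1/lam0) * Real.exp (c g * (lam0 - lam1)) := by
    intro g; positivity
  have hP : 0 < ∏ g, (lam1/lam0) * Real.exp (c g * (lam0 - lam1)) :=
    Finset.prod_pos fun g _ => hMpos g
  have hint : ∀ p : ℝ,
      (∫ θ in (0:ℝ)..1, θ ^ p * (1 - θ) ^ (b - 1) * (1 - θ * (1 - lam1 / lam0)) ^ n *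
          ∏ g, (1 - θ * (1 - (lam1 / lam0) * Real.exp (c g * (lam0 - lam1)))))
        = (∏ g, (lam1/lam0) * Real.exp (c g * (lam0 - lam1))) *
          ∫ θ in (0:ℝ)..1, θ ^ p * (1-θ)^(b-1) * (1 - θ*(1 - lam1/lam0))^n *
            ∏ g, (θ + (1-θ)/((lam1/lam0) * Real.exp (c g * (lam0-lam1)))) := by
    intro p
    rw [← intervalIntegral.integral_const_mul]
    refine intervalIntegral.integral_congr fun θ _ => ?_
    have hfac : ∀ g : Fin q, 1 - θ * (1 - (lam1 / lam0) * Real.exp (c g * (lam0 - lam1)))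
        = ((lam1/lam0) * Real.exp (c g * (lam0 - lam1))) *
          (θ + (1-θ)/((lam1/lam0) * Real.exp (c g * (lam0-lam1)))) := by
      intro g
      have := hMpos g
      field_simp
      ring
    simp only [hfac, Finset.prod_mul_distrib]
    ring
  simp only [hint]
  exact (mul_div_mul_left _ _ (ne_of_gt hP)).symm
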